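/- Let s : ℝ → ℝ be differentiable and α, β, ρ ∈ ℝ with ρ² = β² - 4α, ρ > 0. If y solves y'' + (2β y + 3 s(z)) y' + 2α y³ + 2β s(z) y² + (2 s(z)² + s'(z)) y = 0, and S is an antiderivative of s, then I(z) = e^{4ρ S(z)} (2y' + 2 s y + (β+ρ) y²)^{ρ+β} (2y' + 2 s y + (β-ρ) y²)^{ρ-β} is constant on any interval where both bases 2y' + 2sy + (β±ρ)y² are positive. -/

import Mathlib

theorem stmt_12 (α β ρ : ℝ) (hρ : ρ ^ 2 = β ^ 2 - 4 * α) (hρpos : 0 < ρ)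
    (s S : ℝ → ℝ) (hs : Differentiable ℝ s)
    (hS : ∀ z : ℝ, HasDerivAt S (s z) z)
    (y : ℝ → ℝ) (hy : Differentiable ℝ y) (hy' : Differentiable ℝ (deriv y))
    (heq : ∀ z : ℝ,
      deriv (deriv y) z + (2 * β * y z + 3 * s z) * deriv y z
        + 2 * α * y z ^ 3 + 2 * β * s z * y z ^ 2 + (2 * s z ^ 2 + deriv s z) * y z = 0)
    (a b : ℝ)
    (hpos : ∀ z ∈ Set.Ioo a b,
      0 < 2 * deriv y z + 2 * s z * y z + (β + ρ) * y z ^ 2 ∧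
      0 < 2 * deriv y z + 2 * s z * y z + (β - ρ) * y z ^ 2) :
    ∀ x ∈ Set.Ioo a b, ∀ x' ∈ Set.Ioo a b,
      Real.exp (4 * ρ * S x) *
        (2 * deriv y x + 2 * s x * y x + (β + ρ) * y x ^ 2) ^ (ρ + β) *
        (2 * deriv y x + 2 * s x * y x + (β - ρ) * y x ^ 2) ^ (ρ - β)
      = Real.exp (4 * ρ * S x') *
        (2 * deriv y x' + 2 * s x' * y x' + (β + ρ) * y x' ^ 2) ^ (ρ + β) *
        (2 * deriv y x' + 2 * s x' * y x' + (β - ρ) * y x' ^ 2) ^ (ρ - β) := by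
  set P : ℝ → ℝ := fun z => 2 * deriv y z + 2 * s z * y z + (β + ρ) * y z ^ 2 with hP
  set Q : ℝ → ℝ := fun z => 2 * deriv y z + 2 * s z * y z + (β - ρ) * y z ^ 2 with hQ
  set F : ℝ → ℝ := fun z =>
    4 * ρ * S z + (ρ + β) * Real.log (P z) + (ρ - β) * Real.log (Q z) with hF
  -- F has derivative 0 on the interval
  have hFderiv : ∀ z ∈ Set.Ioo a b, HasDerivWithinAt F 0 (Set.Ioo a b) z := by
    intro z hz
    obtain ⟨hPpos, hQpos⟩ := hpos z hz
    have hyz : HasDerivAt y (deriv y z) z := (hy z).hasDerivAt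
    have hyz' : HasDerivAt (deriv y) (deriv (deriv y) z) z := (hy' z).hasDerivAt
    have hsz : HasDerivAt s (deriv s z) z := (hs z).hasDerivAt
    have hPd : HasDerivAt P
        (2 * deriv (deriv y) z + (2 * (deriv s z * y z + s z * deriv y z))
          + (β + ρ) * (2 * y z * deriv y z)) z := by
      have h := ((hyz'.const_mul 2).add ((hsz.mul hyz).const_mul 2)).add
        (((hyz.pow 2).const_mul (β + ρ)))
      convert h using 1
      rfl
      rfl
      · funext w; simp only [hP, Pi.add_apply, Pi.mul_apply, Pi.pow_apply]; ring
      · push_cast; ring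
    have hQd : HasDerivAt Q
        (2 * deriv (deriv y) z + (2 * (deriv s z * y z + s z * deriv y z))
          + (β - ρ) * (2 * y z * deriv y z)) z := by
      have h := ((hyz'.const_mul 2).add ((hsz.mul hyz).const_mul 2)).add
        (((hyz.pow 2).const_mul (β - ρ)))
      convert h using 1
      rfl
      rfl
      · funext w; simp only [hQ, Pi.add_apply, Pi.mul_apply, Pi.pow_apply]; ring
      · push_cast; ring
    have hPval : (2 * deriv (deriv y) z + (2 * (deriv s z * y z + s z * deriv y z))
          + (β + ρ) * (2 * y z * deriv y z)) = -(2 * s z + (β - ρ) * y z) * P z := by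
      simp only [hP]
      linear_combination 2 * heq z - y z ^ 3 * hρ
    have hQval : (2 * deriv (deriv y) z + (2 * (deriv s z * y z + s z * deriv y z))
          + (β - ρ) * (2 * y z * deriv y z)) = -(2 * s z + (β + ρ) * y z) * Q z := by
      simp only [hQ]
      linear_combination 2 * heq z - y z ^ 3 * hρ
    have hPlog := (hPd.log hPpos.ne').const_mul (ρ + β)
    have hQlog := (hQd.log hQpos.ne').const_mul (ρ - β)
    have hFd := (((hS z).const_mul (4 * ρ)).add hPlog).add hQlog
    have : HasDerivAt F 0 z := by
      convert hFd using 1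
      rfl
      rfl
      rfl
      rw [hPval, hQval]
      field_simp [show P z ≠ 0 from hPpos.ne', show Q z ≠ 0 from hQpos.ne']
      ring
    exact this.hasDerivWithinAt
  -- F is constant on the interval
  have hconst : ∀ x ∈ Set.Ioo a b, ∀ x' ∈ Set.Ioo a b, F x = F x' := by
    intro x hx x' hx'
    have := Convex.norm_image_sub_le_of_norm_hasDerivWithin_le
      (f := F) (f' := fun _ => 0) (C := 0) (fun w hw => hFderiv w hw)
      (fun w _ => by simp) (convex_Ioo a b) hx hx'
    have h0 : ‖F x' - F x‖ ≤ 0 := by simpa using this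
    exact (sub_eq_zero.mp (norm_le_zero_iff.mp h0)).symm
  -- conclude
  intro x hx x' hx'
  obtain ⟨hPx, hQx⟩ := hpos x hx
  obtain ⟨hPx', hQx'⟩ := hpos x' hx'
  have key : ∀ w ∈ Set.Ioo a b,
      Real.exp (4 * ρ * S w) * P w ^ (ρ + β) * Q w ^ (ρ - β) = Real.exp (F w) := by
    intro w hw
    obtain ⟨hPw, hQw⟩ := hpos w hw
    rw [hF, Real.rpow_def_of_pos hPw, Real.rpow_def_of_pos hQw,
      ← Real.exp_add, ← Real.exp_add]
    congr 1
    ring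
  calc Real.exp (4 * ρ * S x) * P x ^ (ρ + β) * Q x ^ (ρ - β)
      = Real.exp (F x) := key x hx
    _ = Real.exp (F x') := by rw [hconst x hx x' hx']
    _ = Real.exp (4 * ρ * S x') * P x' ^ (ρ + β) * Q x' ^ (ρ - β) := (key x' hx').symm
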